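/- Let A, A* be a spin Leonard pair on V and let W, W* be a Boltzmann pair for A, A*. Then there exists a nonzero scalar α ∈ F such that W* W W* = α · W W* W. -/

import Mathlib

noncomputable section

open Finset

variable {F V : Type*} [Field F] [AddCommGroup V] [Module F V]

/-- A matrix is irreducible tridiagonal: each nonzero entry lies on the diagonal,
subdiagonal or superdiagonal, and every subdiagonal and superdiagonal entry is nonzero. -/
def IsIrredTridiag {n : ℕ} {F : Type*} [Field F] (M : Matrix (Fin n) (Fin n) F) : Prop :=
  (∀ i j : Fin n, ((i : ℕ) + 1 < (j : ℕ) ∨ (j : ℕ) + 1 < (i : ℕ)) → M i j = 0) ∧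
  (∀ i j : Fin n, ((i : ℕ) + 1 = (j : ℕ) ∨ (j : ℕ) + 1 = (i : ℕ)) → M i j ≠ 0)

/-- A Leonard pair on `V` (of dimension `d+1`): there is a basis in which `A` is
irreducible tridiagonal and `A*` diagonal, and a basis in which `A*` is irreducible
tridiagonal and `A` diagonal. -/
def IsLeonardPair (d : ℕ) (A Astar : Module.End F V) : Prop :=
  (∃ b : Module.Basis (Fin (d + 1)) F V,
    IsIrredTridiag (LinearMap.toMatrix b b A) ∧ (LinearMap.toMatrix b b Astar).IsDiag) ∧
  (∃ b : Module.Basis (Fin (d + 1)) F V,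
    IsIrredTridiag (LinearMap.toMatrix b b Astar) ∧ (LinearMap.toMatrix b b A).IsDiag)

/-- A Boltzmann pair for the Leonard pair `A, A*` : invertible `W ∈ ⟨A⟩`,
`W* ∈ ⟨A*⟩` with `W A* W⁻¹ = (W*)⁻¹ A W*`. -/
def IsBoltzmannPair (A Astar W Wstar : Module.End F V) : Prop :=
  W ∈ Algebra.adjoin F {A} ∧ Wstar ∈ Algebra.adjoin F {Astar} ∧
  IsUnit W ∧ IsUnit Wstar ∧
  W * Astar * Ring.inverse W = Ring.inverse Wstar * A * Wstar

/-- `E` is an ordering of the primitive idempotents of the multiplicity-free map `B`. -/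
def IsIdemOrdering (d : ℕ) (B : Module.End F V) (E : Fin (d + 1) → Module.End F V) : Prop :=
  (∀ i, E i ≠ 0) ∧ (∀ i j, E i * E j = if i = j then E i else 0) ∧
  (∑ i, E i = 1) ∧ ∃ θ : Fin (d + 1) → F, Function.Injective θ ∧ B = ∑ i, θ i • E i

/-- `E` is a standard ordering of the primitive idempotents of `B` (relative to `C`):
choosing nonzero `vᵢ ∈ Eᵢ V`, the matrix of `C` in the basis `vᵢ` is irreducible
tridiagonal (and the matrix of `B` is diagonal). -/
def IsStandardOrdering (d : ℕ) (B C : Module.End F V)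
    (E : Fin (d + 1) → Module.End F V) : Prop :=
  IsIdemOrdering d B E ∧
  ∃ b : Module.Basis (Fin (d + 1)) F V, (∀ i, E i (b i) = b i) ∧
    IsIrredTridiag (LinearMap.toMatrix b b C) ∧ (LinearMap.toMatrix b b B).IsDiag

/-- A Leonard system on `V`. -/
def IsLeonardSystem (d : ℕ) (A Astar : Module.End F V)
    (E Estar : Fin (d + 1) → Module.End F V) : Prop :=
  IsLeonardPair d A Astar ∧ IsStandardOrdering d A Astar E ∧ IsStandardOrdering d Astar A Estar

/- ## Auxiliary lemmas -/

section Aux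

open Polynomial

/-- An eigenvector of an irreducible tridiagonal matrix whose first coordinate vanishes
is zero. -/
lemma aux_tridiag_eigen_zero {d : ℕ} {F : Type*} [Field F]
    {N : Matrix (Fin (d+1)) (Fin (d+1)) F}
    (hN : IsIrredTridiag N) (θ : F) (x : Fin (d+1) → F)
    (hx : ∀ i, ∑ j, N i j * x j = θ * x i) (h0 : x 0 = 0) : x = 0 := by
  have key : ∀ k : ℕ, ∀ hk : k < d + 1, x ⟨k, hk⟩ = 0 := by
    intro k
    induction k using Nat.strong_induction_on with
    | _ k IH =>
      intro hk
      match k, hk with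
      | 0, hk => exact h0
      | (m+1), hk =>
        have hm : m < d + 1 := by omega
        have hrow := hx ⟨m, hm⟩
        have hxm : x ⟨m, hm⟩ = 0 := IH m (by omega) hm
        rw [hxm, mul_zero] at hrow
        have hsingle : ∑ j, N ⟨m, hm⟩ j * x j = N ⟨m, hm⟩ ⟨m+1, hk⟩ * x ⟨m+1, hk⟩ := by
          apply Finset.sum_eq_single_of_mem _ (Finset.mem_univ _)
          intro j _ hj
          have hjne : (j : ℕ) ≠ m + 1 := fun h => hj (Fin.ext h)
          rcases lt_or_gt_of_ne hjne with h | h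
          · have hxj : x j = 0 := by
              have := IH j (by omega) j.isLt
              simpa using this
            rw [hxj, mul_zero]
          · have : N ⟨m, hm⟩ j = 0 := hN.1 _ _ (Or.inl (by simpa using h))
            rw [this, zero_mul]
        rw [hsingle] at hrow
        have hne : N ⟨m, hm⟩ ⟨m+1, hk⟩ ≠ 0 := hN.2 _ _ (Or.inl rfl)
        exact (mul_eq_zero.mp hrow).resolve_left hne
  funext i
  simpa using key i i.isLt

/-- If `A*` is irreducible tridiagonal in some basis, then its diagonal entries in any
basis where it is diagonal are pairwise distinct. -/
lemma aux_diag_distinct {d : ℕ} {Astar : Module.End F V}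
    (b' : Module.Basis (Fin (d+1)) F V) (hN : IsIrredTridiag (LinearMap.toMatrix b' b' Astar))
    (b : Module.Basis (Fin (d+1)) F V) (hdiag : (LinearMap.toMatrix b b Astar).IsDiag) :
    ∀ i j : Fin (d+1), i ≠ j →
      LinearMap.toMatrix b b Astar i i ≠ LinearMap.toMatrix b b Astar j j := by
  set N := LinearMap.toMatrix b' b' Astar with hNdef
  have heig : ∀ i : Fin (d+1), Astar (b i) = LinearMap.toMatrix b b Astar i i • b i := by
    intro i
    apply b.repr.injective
    ext k
    rw [map_smul]
    by_cases hk : k = i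
    · subst hk
      simp [← LinearMap.toMatrix_apply]
    · have h1 : LinearMap.toMatrix b b Astar k i = 0 := hdiag hk
      rw [← LinearMap.toMatrix_apply] at *
      simp [h1, Finsupp.single_apply, hk, Ne.symm hk, Module.Basis.repr_self]
  have key : ∀ (θ : F) (w : V), Astar w = θ • w → b'.repr w 0 = 0 → w = 0 := by
    intro θ w hw h0
    have hmv := LinearMap.toMatrix_mulVec_repr b' b' Astar w
    rw [hw, map_smul] at hmv
    have hx : ∀ i, ∑ j, N i j * (b'.repr w) j = θ * (b'.repr w) i := by
      intro i
      have := congrFun hmv i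
      simpa [Matrix.mulVec, dotProduct] using this
    have hz : (fun j => (b'.repr w) j) = 0 := by
      apply aux_tridiag_eigen_zero hN θ _ hx h0
    have : b'.repr w = 0 := DFunLike.coe_injective hz
    exact (LinearEquiv.map_eq_zero_iff _).mp this
  intro i j hij heq
  set θ := LinearMap.toMatrix b b Astar i i with hθ
  have hbi : Astar (b i) = θ • b i := heig i
  have hbj : Astar (b j) = θ • b j := by rw [heig j, ← heq]
  set ci := b'.repr (b i) 0 with hci
  set cj := b'.repr (b j) 0 with hcj
  have hcine : ci ≠ 0 := fun h => b.ne_zero i (key θ (b i) hbi h)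
  set v := cj • b i - ci • b j with hv
  have hveig : Astar v = θ • v := by
    rw [hv, map_sub, map_smul, map_smul, hbi, hbj, smul_sub, smul_comm cj θ, smul_comm ci θ]
  have hv0 : b'.repr v 0 = 0 := by
    simp only [hv, map_sub, map_smul, Finsupp.sub_apply, Finsupp.smul_apply, ← hci, ← hcj,
      smul_eq_mul]
    ring
  have hvz : v = 0 := key θ v hveig hv0
  have := congrArg (fun w => b.repr w j) hvz
  simp only [hv, map_sub, map_smul, Finsupp.sub_apply, Finsupp.smul_apply, Module.Basis.repr_self,
    Finsupp.single_apply, smul_eq_mul] at this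
  rw [if_neg hij] at this
  simp at this
  exact hcine this

/-- A matrix commuting with an irreducible tridiagonal matrix and with a diagonal matrix
having distinct diagonal entries is a scalar matrix. -/
lemma aux_central_scalar {d : ℕ} {F : Type*} [Field F]
    {M Ms P : Matrix (Fin (d+1)) (Fin (d+1)) F}
    (hM : IsIrredTridiag M) (hMs : Ms.IsDiag)
    (hdist : ∀ i j : Fin (d+1), i ≠ j → Ms i i ≠ Ms j j)
    (h1 : P * M = M * P) (h2 : P * Ms = Ms * P) :
    P = P 0 0 • (1 : Matrix (Fin (d+1)) (Fin (d+1)) F) := by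
  have hoff : ∀ i j : Fin (d+1), i ≠ j → P i j = 0 := by
    intro i j hij
    have e1 := congrFun (congrFun h2 i) j
    simp only [Matrix.mul_apply] at e1
    rw [Finset.sum_eq_single_of_mem j (Finset.mem_univ _)
        (fun k _ hk => by rw [hMs hk, mul_zero]),
      Finset.sum_eq_single_of_mem i (Finset.mem_univ _)
        (fun k _ hk => by rw [hMs (Ne.symm hk), zero_mul])] at e1
    by_contra hP
    rw [mul_comm (Ms i i) (P i j)] at e1
    exact hdist i j hij ((mul_left_cancel₀ hP e1).symm ▸ rfl)
  have hstep : ∀ (k : ℕ) (hk : k + 1 < d + 1),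
      P ⟨k+1, hk⟩ ⟨k+1, hk⟩ = P ⟨k, by omega⟩ ⟨k, by omega⟩ := by
    intro k hk
    have hkk : k < d + 1 := by omega
    have e1 := congrFun (congrFun h1 ⟨k, hkk⟩) ⟨k+1, hk⟩
    simp only [Matrix.mul_apply] at e1
    rw [Finset.sum_eq_single_of_mem ⟨k, hkk⟩ (Finset.mem_univ _)
        (fun l _ hl => by rw [hoff _ _ (Ne.symm hl), zero_mul]),
      Finset.sum_eq_single_of_mem ⟨k+1, hk⟩ (Finset.mem_univ _)
        (fun l _ hl => by rw [hoff _ _ hl, mul_zero])] at e1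
    have hMne : M ⟨k, hkk⟩ ⟨k+1, hk⟩ ≠ 0 := hM.2 _ _ (Or.inl rfl)
    rw [mul_comm] at e1
    exact (mul_left_cancel₀ hMne e1).symm
  have hdiag : ∀ i : Fin (d+1), P i i = P 0 0 := by
    intro i
    obtain ⟨k, hk⟩ := i
    induction k with
    | zero => rfl
    | succ m ih =>
      rw [hstep m hk, ih (by omega)]
  ext i j
  by_cases hij : i = j
  · subst hij
    simp [Matrix.one_apply, hdiag i]
  · simp [Matrix.one_apply, hij, hoff i j hij]

/-- A symmetrizing vector for an irreducible tridiagonal matrix. -/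
lemma aux_symmetrizer {d : ℕ} {F : Type*} [Field F]
    {M : Matrix (Fin (d+1)) (Fin (d+1)) F} (hM : IsIrredTridiag M) :
    ∃ lam : Fin (d+1) → F, (∀ i, lam i ≠ 0) ∧
      ∀ i j : Fin (d+1), lam i * M j i = lam j * M i j := by
  classical
  let r : ℕ → F := fun k => if h : k + 1 < d + 1 then
      M ⟨k+1, h⟩ ⟨k, by omega⟩ / M ⟨k, by omega⟩ ⟨k+1, h⟩ else 1
  let mu : ℕ → F := fun k => Nat.rec 1 (fun m acc => acc * r m) k
  have hrne : ∀ k, r k ≠ 0 := by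
    intro k
    by_cases h : k + 1 < d + 1
    · have hr : r k = M ⟨k+1, h⟩ ⟨k, by omega⟩ / M ⟨k, by omega⟩ ⟨k+1, h⟩ := dif_pos h
      rw [hr]
      exact div_ne_zero (hM.2 _ _ (Or.inr rfl)) (hM.2 _ _ (Or.inl rfl))
    · have hr : r k = 1 := dif_neg h
      rw [hr]
      exact one_ne_zero
  have hmune : ∀ k, mu k ≠ 0 := by
    intro k
    induction k with
    | zero => simp [mu]
    | succ m ih => exact mul_ne_zero ih (hrne m)
  refine ⟨fun i => mu i, fun i => hmune i, ?_⟩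
  have hadj : ∀ (k : ℕ) (hk : k + 1 < d + 1),
      mu (k+1) * M ⟨k, by omega⟩ ⟨k+1, hk⟩ = mu k * M ⟨k+1, hk⟩ ⟨k, by omega⟩ := by
    intro k hk
    have : mu (k+1) = mu k * r k := rfl
    rw [this]
    have hr : r k = M ⟨k+1, hk⟩ ⟨k, by omega⟩ / M ⟨k, by omega⟩ ⟨k+1, hk⟩ := dif_pos hk
    rw [hr, mul_assoc, div_mul_cancel₀ _ (hM.2 _ _ (Or.inl rfl))]
  intro i j
  rcases lt_trichotomy (i : ℕ) (j : ℕ) with h | h | h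
  · rcases Nat.lt_or_ge ((i : ℕ) + 1) (j : ℕ) with h2 | h2
    · rw [hM.1 i j (Or.inl h2), hM.1 j i (Or.inr h2), mul_zero, mul_zero]
    · have hij : (j : ℕ) = (i : ℕ) + 1 := by omega
      have hk : (i : ℕ) + 1 < d + 1 := by rw [← hij]; exact j.isLt
      have := hadj i hk
      have hi' : (⟨(i:ℕ), by omega⟩ : Fin (d+1)) = i := by ext; rfl
      have hj' : (⟨(i:ℕ)+1, hk⟩ : Fin (d+1)) = j := by ext; simp [hij]
      rw [hi', hj'] at this
      show mu (i:ℕ) * M j i = mu (j:ℕ) * M i j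
      rw [hij]
      exact this.symm
  · have : i = j := Fin.ext h
    subst this
    show mu (i:ℕ) * M i i = mu (i:ℕ) * M i i
    rfl
  · rcases Nat.lt_or_ge ((j : ℕ) + 1) (i : ℕ) with h2 | h2
    · rw [hM.1 i j (Or.inr h2), hM.1 j i (Or.inl h2), mul_zero, mul_zero]
    · have hij : (i : ℕ) = (j : ℕ) + 1 := by omega
      have hk : (j : ℕ) + 1 < d + 1 := by rw [← hij]; exact i.isLt
      have := hadj j hk
      have hj' : (⟨(j:ℕ), by omega⟩ : Fin (d+1)) = j := by ext; rfl
      have hi' : (⟨(j:ℕ)+1, hk⟩ : Fin (d+1)) = i := by ext; simp [hij]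
      rw [hj', hi'] at this
      show mu (i:ℕ) * M j i = mu (j:ℕ) * M i j
      rw [hij]
      exact this

/-- The antiautomorphism `P ↦ Λ Pᵀ Λ⁻¹` of the matrix algebra. -/
def tauM {d : ℕ} {F : Type*} [Field F] (lam : Fin (d+1) → F)
    (P : Matrix (Fin (d+1)) (Fin (d+1)) F) : Matrix (Fin (d+1)) (Fin (d+1)) F :=
  Matrix.of fun i j => lam i * P j i * (lam j)⁻¹

lemma tauM_mul {d : ℕ} {F : Type*} [Field F] (lam : Fin (d+1) → F) (hl : ∀ i, lam i ≠ 0)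
    (P Q : Matrix (Fin (d+1)) (Fin (d+1)) F) :
    tauM lam (P * Q) = tauM lam Q * tauM lam P := by
  ext i j
  simp only [tauM, Matrix.of_apply, Matrix.mul_apply, Finset.sum_mul, Finset.mul_sum]
  apply Finset.sum_congr rfl
  intro k _
  rw [show lam i * Q k i * (lam k)⁻¹ * (lam k * P j k * (lam j)⁻¹)
      = ((lam k)⁻¹ * lam k) * (lam i * (P j k * Q k i) * (lam j)⁻¹) by ring,
    inv_mul_cancel₀ (hl k), one_mul]

lemma tauM_one {d : ℕ} {F : Type*} [Field F] (lam : Fin (d+1) → F) (hl : ∀ i, lam i ≠ 0) :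
    tauM lam (1 : Matrix (Fin (d+1)) (Fin (d+1)) F) = 1 := by
  ext i j
  by_cases hij : i = j
  · subst hij
    simp only [tauM, Matrix.of_apply, Matrix.one_apply_eq]
    rw [mul_one, mul_inv_cancel₀ (hl i)]
  · have : (1 : Matrix (Fin (d+1)) (Fin (d+1)) F) j i = 0 := Matrix.one_apply_ne (Ne.symm hij)
    simp only [tauM, Matrix.of_apply, this, Matrix.one_apply_ne hij, mul_zero, zero_mul]

lemma tauM_smul {d : ℕ} {F : Type*} [Field F] (lam : Fin (d+1) → F) (c : F)
    (P : Matrix (Fin (d+1)) (Fin (d+1)) F) :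
    tauM lam (c • P) = c • tauM lam P := by
  ext i j
  simp [tauM]
  ring

lemma tauM_add {d : ℕ} {F : Type*} [Field F] (lam : Fin (d+1) → F)
    (P Q : Matrix (Fin (d+1)) (Fin (d+1)) F) :
    tauM lam (P + Q) = tauM lam P + tauM lam Q := by
  ext i j
  simp [tauM]
  ring

lemma tauM_pow {d : ℕ} {F : Type*} [Field F] (lam : Fin (d+1) → F) (hl : ∀ i, lam i ≠ 0)
    {M : Matrix (Fin (d+1)) (Fin (d+1)) F} (hfix : tauM lam M = M) (n : ℕ) :
    tauM lam (M ^ n) = M ^ n := by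
  induction n with
  | zero => simpa using tauM_one lam hl
  | succ m ih => rw [pow_succ, tauM_mul lam hl, ih, hfix, ← pow_succ]
                 exact (pow_mul_comm' M m).symm

lemma tauM_aeval {d : ℕ} {F : Type*} [Field F] (lam : Fin (d+1) → F) (hl : ∀ i, lam i ≠ 0)
    {M : Matrix (Fin (d+1)) (Fin (d+1)) F} (hfix : tauM lam M = M) (q : F[X]) :
    tauM lam (aeval M q) = aeval M q := by
  induction q using Polynomial.induction_on' with
  | add p q hp hq => rw [map_add, tauM_add, hp, hq]
  | monomial n c =>
    rw [aeval_monomial, Algebra.algebraMap_eq_smul_one, smul_mul_assoc, one_mul,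
      tauM_smul, tauM_pow lam hl hfix]

lemma aux_commute_adjoin {S : Type*} [Ring S] [Algebra F S] {a x : S}
    (hx : x ∈ Algebra.adjoin F {a}) : a * x = x * a := by
  rw [Algebra.adjoin_singleton_eq_range_aeval] at hx
  obtain ⟨q, rfl⟩ := hx
  simp only [AlgHom.toRingHom_eq_coe, RingHom.coe_coe]
  induction q using Polynomial.induction_on' with
  | add p q hp hq => rw [map_add, mul_add, add_mul, hp, hq]
  | monomial n c =>
    rw [aeval_monomial]
    calc a * (algebraMap F S c * a ^ n) = algebraMap F S c * (a * a ^ n) := by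
          rw [← mul_assoc, ← Algebra.commutes c a, mul_assoc]
      _ = algebraMap F S c * (a ^ n * a) := by
          rw [← pow_succ', pow_succ]
      _ = algebraMap F S c * a ^ n * a := by rw [mul_assoc]

end Aux

/-- for a Boltzmann pair `W, W*` of a spin Leonard pair,
`W* W W*` and `W W* W` agree up to a nonzero scalar factor. -/
theorem boltzmann_WWsW_proportional {F V : Type*} [Field F] [AddCommGroup V] [Module F V]
    (d : ℕ) (A Astar W Wstar : Module.End F V)
    (hLP : IsLeonardPair d A Astar)
    (hB : IsBoltzmannPair A Astar W Wstar) :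
    ∃ α : F, α ≠ 0 ∧ Wstar * W * Wstar = α • (W * Wstar * W) := by
  classical
  obtain ⟨⟨b, hMtri, hMsdiag⟩, ⟨b', hNtri, -⟩⟩ := hLP
  obtain ⟨hWmem, hWsmem, hWu, hWsu, hrel⟩ := hB
  have hAW : A * W = W * A := aux_commute_adjoin hWmem
  have hAsWs : Astar * Wstar = Wstar * Astar := aux_commute_adjoin hWsmem
  obtain ⟨u, rfl⟩ := hWu
  obtain ⟨v, rfl⟩ := hWsu
  rw [Ring.inverse_unit, Ring.inverse_unit] at hrel
  -- relation R1 : W* W A* = A W* W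
  have hR1 : (↑v : Module.End F V) * ↑u * Astar = A * (↑v * ↑u) := by
    have h2 := congrArg (fun X => (↑v : Module.End F V) * X * ↑u) hrel
    simpa [mul_assoc] using h2
  -- transfer to matrices
  set ee := LinearMap.toMatrixAlgEquiv b with hee
  have heeq : ∀ f : Module.End F V, ee f = LinearMap.toMatrix b b f := fun _ => rfl
  obtain ⟨lam, hl, hsym⟩ := aux_symmetrizer hMtri
  have hfixA : tauM lam (ee A) = ee A := by
    ext i j
    simp only [tauM, Matrix.of_apply]
    rw [heeq, hsym i j, mul_comm (lam j) _, mul_assoc, mul_inv_cancel₀ (hl j), mul_one]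
  have hfixAs : tauM lam (ee Astar) = ee Astar := by
    ext i j
    by_cases hij : i = j
    · subst hij
      simp only [tauM, Matrix.of_apply]
      rw [mul_comm (lam i) _, mul_assoc, mul_inv_cancel₀ (hl i), mul_one]
    · simp only [tauM, Matrix.of_apply, heeq, hMsdiag (Ne.symm hij), hMsdiag hij,
        mul_zero, zero_mul]
  have hfixW : tauM lam (ee ↑u) = ee ↑u := by
    rw [Algebra.adjoin_singleton_eq_range_aeval] at hWmem
    obtain ⟨qW, hqW⟩ := hWmem
    have hqW' : Polynomial.aeval A qW = ↑u := hqW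
    have : ee ↑u = Polynomial.aeval (ee A) qW := by
      rw [← hqW', Polynomial.aeval_algHom_apply]
    rw [this]
    exact tauM_aeval lam hl hfixA qW
  have hfixWs : tauM lam (ee ↑v) = ee ↑v := by
    rw [Algebra.adjoin_singleton_eq_range_aeval] at hWsmem
    obtain ⟨qWs, hqWs⟩ := hWsmem
    have hqWs' : Polynomial.aeval Astar qWs = ↑v := hqWs
    have : ee ↑v = Polynomial.aeval (ee Astar) qWs := by
      rw [← hqWs', Polynomial.aeval_algHom_apply]
    rw [this]
    exact tauM_aeval lam hl hfixAs qWs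
  -- relation R2 : A* W W* = W W* A (via the antiautomorphism)
  have hR2 : Astar * (↑u * ↑v) = ↑u * (↑v * A) := by
    apply ee.injective
    have hmrel : ee ↑v * ee ↑u * ee Astar = ee A * (ee ↑v * ee ↑u) := by
      have := congrArg ee hR1
      simpa only [map_mul] using this
    calc ee (Astar * (↑u * ↑v))
        = tauM lam (ee ↑v * ee ↑u * ee Astar) := by
          rw [tauM_mul lam hl, tauM_mul lam hl, hfixAs, hfixW, hfixWs, map_mul, map_mul]
      _ = tauM lam (ee A * (ee ↑v * ee ↑u)) := by rw [hmrel]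
      _ = ee (↑u * (↑v * A)) := by
          rw [tauM_mul lam hl, tauM_mul lam hl, hfixA, hfixW, hfixWs, map_mul, map_mul,
            mul_assoc]
  -- braid elements
  set t : (Module.End F V)ˣ := u * v * u with ht
  set t' : (Module.End F V)ˣ := v * u * v with ht'
  have htval : (↑t : Module.End F V) = ↑u * ↑v * ↑u := rfl
  have ht'val : (↑t' : Module.End F V) = ↑v * ↑u * ↑v := rfl
  have hTAs : (↑t : Module.End F V) * Astar = A * ↑t := by
    rw [htval]
    calc ↑u * ↑v * ↑u * Astar = ↑u * (↑v * ↑u * Astar) := by simp only [mul_assoc]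
      _ = ↑u * (A * (↑v * ↑u)) := by rw [hR1]
      _ = (↑u * A) * (↑v * ↑u) := by simp only [mul_assoc]
      _ = (A * ↑u) * (↑v * ↑u) := by rw [← hAW]
      _ = A * (↑u * ↑v * ↑u) := by simp only [mul_assoc]
  have hT'As : (↑t' : Module.End F V) * Astar = A * ↑t' := by
    rw [ht'val]
    calc ↑v * ↑u * ↑v * Astar = ↑v * ↑u * (↑v * Astar) := by simp only [mul_assoc]
      _ = ↑v * ↑u * (Astar * ↑v) := by rw [← hAsWs]
      _ = (↑v * ↑u * Astar) * ↑v := by simp only [mul_assoc]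
      _ = (A * (↑v * ↑u)) * ↑v := by rw [hR1]
      _ = A * (↑v * ↑u * ↑v) := by simp only [mul_assoc]
  have hTA : (↑t : Module.End F V) * A = Astar * ↑t := by
    rw [htval]
    calc ↑u * ↑v * ↑u * A = ↑u * ↑v * (↑u * A) := by simp only [mul_assoc]
      _ = ↑u * ↑v * (A * ↑u) := by rw [hAW]
      _ = (↑u * (↑v * A)) * ↑u := by simp only [mul_assoc]
      _ = (Astar * (↑u * ↑v)) * ↑u := by rw [← hR2]
      _ = Astar * (↑u * ↑v * ↑u) := by simp only [mul_assoc]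
  have hT'A : (↑t' : Module.End F V) * A = Astar * ↑t' := by
    rw [ht'val]
    calc ↑v * ↑u * ↑v * A = ↑v * (↑u * (↑v * A)) := by simp only [mul_assoc]
      _ = ↑v * (Astar * (↑u * ↑v)) := by rw [← hR2]
      _ = (↑v * Astar) * (↑u * ↑v) := by simp only [mul_assoc]
      _ = (Astar * ↑v) * (↑u * ↑v) := by rw [hAsWs]
      _ = Astar * (↑v * ↑u * ↑v) := by simp only [mul_assoc]
  -- the element X = t' t⁻¹ commutes with A and A*
  have hinv1 : Astar * (↑t⁻¹ : Module.End F V) = ↑t⁻¹ * A := by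
    have h := congrArg (fun X => (↑t⁻¹ : Module.End F V) * X * ↑t⁻¹) hTAs
    simpa [mul_assoc] using h
  have hinv2 : A * (↑t⁻¹ : Module.End F V) = ↑t⁻¹ * Astar := by
    have h := congrArg (fun X => (↑t⁻¹ : Module.End F V) * X * ↑t⁻¹) hTA
    simpa [mul_assoc] using h
  set X : Module.End F V := ↑t' * ↑t⁻¹ with hX
  have hXA : X * A = A * X := by
    calc ↑t' * ↑t⁻¹ * A = ↑t' * (↑t⁻¹ * A) := by rw [mul_assoc]
      _ = ↑t' * (Astar * ↑t⁻¹) := by rw [← hinv1]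
      _ = (↑t' * Astar) * ↑t⁻¹ := by rw [mul_assoc]
      _ = (A * ↑t') * ↑t⁻¹ := by rw [hT'As]
      _ = A * (↑t' * ↑t⁻¹) := by rw [mul_assoc]
  have hXAs : X * Astar = Astar * X := by
    calc ↑t' * ↑t⁻¹ * Astar = ↑t' * (↑t⁻¹ * Astar) := by rw [mul_assoc]
      _ = ↑t' * (A * ↑t⁻¹) := by rw [← hinv2]
      _ = (↑t' * A) * ↑t⁻¹ := by rw [mul_assoc]
      _ = (Astar * ↑t') * ↑t⁻¹ := by rw [hT'A]
      _ = Astar * (↑t' * ↑t⁻¹) := by rw [mul_assoc]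
  -- X is a scalar
  have hdist := aux_diag_distinct b' hNtri b hMsdiag
  have hPM : ee X * ee A = ee A * ee X := by
    rw [← map_mul, ← map_mul, hXA]
  have hPMs : ee X * ee Astar = ee Astar * ee X := by
    rw [← map_mul, ← map_mul, hXAs]
  have hscal := aux_central_scalar hMtri hMsdiag hdist hPM hPMs
  set α := ee X 0 0 with hα
  have hXs : X = α • 1 := by
    apply ee.injective
    rw [map_smul, map_one]
    exact hscal
  have hαne : α ≠ 0 := by
    intro h0
    rw [h0, zero_smul] at hXs
    have hunit : IsUnit X := by
      rw [hX]
      exact (t' * t⁻¹).isUnit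
    rw [hXs, isUnit_zero_iff] at hunit
    have hb0 := b.ne_zero 0
    apply hb0
    have := congrArg (fun f : Module.End F V => f (b 0)) hunit.symm
    simpa using this
  refine ⟨α, hαne, ?_⟩
  have hfin : (↑t' : Module.End F V) = X * ↑t := by
    rw [hX, mul_assoc]
    simp
  calc ↑v * ↑u * ↑v = (↑t' : Module.End F V) := ht'val.symm
    _ = X * ↑t := hfin
    _ = (α • 1) * ↑t := by rw [hXs]
    _ = α • (↑u * ↑v * ↑u) := by rw [smul_mul_assoc, one_mul, htval]
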